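/- Let N ≥ 2, α ∈ (0, 1/2], β ∈ [0, α/2), let S be an (α,β)-admissible N×N real matrix, let θ : {1,…,N} → ℝ be any angles, and let 0 < h ≤ 1/(2N). Then for every x in the convex hull of V̄, both h·Λ(R_θ x) and h·Λ((S⊗I₂)ᵀ(R_θ x)) belong to the convex hull of V̄. -/

import Mathlib

open Finset

/-- The vertex set `V̄` of vectors `v_{p,q,j}` with `p ≠ q`, `j ∈ {1,2}`. -/
def vertexSetVbar (N : ℕ) : Set (Fin N × Fin 2 → ℝ) :=
  {v | ∃ p q : Fin N, ∃ j : Fin 2, p ≠ q ∧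
    v = fun il => if il = (p, j) then (1 / 2 : ℝ) else if il = (q, j) then -(1 / 2 : ℝ) else 0}

/-- The block-diagonal rotation `R_θ` acting on `ℝ^{2N}`. -/
noncomputable def rotMap {N : ℕ} (θ : Fin N → ℝ) (x : Fin N × Fin 2 → ℝ) :
    Fin N × Fin 2 → ℝ :=
  fun il =>
    if il.2 = 0 then Real.cos (θ il.1) * x (il.1, 0) - Real.sin (θ il.1) * x (il.1, 1)
    else Real.sin (θ il.1) * x (il.1, 0) + Real.cos (θ il.1) * x (il.1, 1)

/-- The orthogonal projection `Λ`: `(Λx)(i,j) = x(i,j) − (1/N) ∑_k x(k,j)`. -/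
noncomputable def lamMap {N : ℕ} (x : Fin N × Fin 2 → ℝ) : Fin N × Fin 2 → ℝ :=
  fun il => x il - (1 / (N : ℝ)) * ∑ k, x (k, il.2)

/-- The action of `(S ⊗ I₂)ᵀ` on `ℝ^{2N}`: `((S⊗I₂)ᵀ x)(i,j) = ∑ k, S k i * x (k,j)`. -/
def kronTr {N : ℕ} (S : Matrix (Fin N) (Fin N) ℝ) (x : Fin N × Fin 2 → ℝ) :
    Fin N × Fin 2 → ℝ :=
  fun il => ∑ k, S k il.1 * x (k, il.2)

/-- An `N × N` real matrix `S` is `(α,β)`-admissible if every row sums to `1`,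
the negative part of every row sums to at least `-β`, and every pair of distinct
rows shares a column where both entries are at least `α` (neighbor-shared). -/
def Admissible {N : ℕ} (α β : ℝ) (S : Matrix (Fin N) (Fin N) ℝ) : Prop :=
  (∀ i, ∑ j, S i j = 1) ∧ (∀ i, -β ≤ ∑ j, min (S i j) 0) ∧
    (∀ p q : Fin N, p ≠ q → ∃ i, α ≤ S p i ∧ α ≤ S q i)

-- ===== auxiliary lemmas =====

lemma aux_l1_bound {N : ℕ} (T : Fin N → Fin N → ℝ) (C : ℝ)
    (hT : ∀ k, ∑ i, |T k i| ≤ C) (z : Fin N × Fin 2 → ℝ) :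
    ∑ il : Fin N × Fin 2, |∑ k, T k il.1 * z (k, il.2)| ≤ C * ∑ il : Fin N × Fin 2, |z il| := by
  rw [Fintype.sum_prod_type]
  have step1 : ∀ i : Fin N, ∀ l : Fin 2, |∑ k, T k i * z (k, l)| ≤ ∑ k, |T k i| * |z (k, l)| := by
    intro i l
    refine le_trans (abs_sum_le_sum_abs _ _) ?_
    exact Finset.sum_le_sum fun k _ => le_of_eq (abs_mul _ _)
  calc ∑ i : Fin N, ∑ l : Fin 2, |∑ k, T k i * z (k, l)|
      ≤ ∑ i : Fin N, ∑ l : Fin 2, ∑ k, |T k i| * |z (k, l)| := by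
        refine Finset.sum_le_sum fun i _ => Finset.sum_le_sum fun l _ => step1 i l
    _ = ∑ i : Fin N, ∑ k, |T k i| * (∑ l : Fin 2, |z (k, l)|) := by
        refine Finset.sum_congr rfl fun i _ => ?_
        rw [Finset.sum_comm]
        exact Finset.sum_congr rfl fun k _ => (Finset.mul_sum _ _ _).symm
    _ = ∑ k, (∑ i, |T k i|) * (∑ l : Fin 2, |z (k, l)|) := by
        rw [Finset.sum_comm]
        exact Finset.sum_congr rfl fun k _ => (Finset.sum_mul _ _ _).symm
    _ ≤ ∑ k, C * (∑ l : Fin 2, |z (k, l)|) := by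
        refine Finset.sum_le_sum fun k _ => ?_
        refine mul_le_mul_of_nonneg_right (hT k) ?_
        exact Finset.sum_nonneg fun l _ => abs_nonneg _
    _ = C * ∑ il : Fin N × Fin 2, |z il| := by
        rw [Fintype.sum_prod_type, Finset.mul_sum]

lemma aux_lam_as_T {N : ℕ} (z : Fin N × Fin 2 → ℝ) (il : Fin N × Fin 2) :
    lamMap z il = ∑ k, (if k = il.1 then 1 - 1 / (N : ℝ) else -(1 / (N : ℝ))) * z (k, il.2) := by
  have : ∀ k : Fin N, (if k = il.1 then 1 - 1/(N:ℝ) else -(1/(N:ℝ))) * z (k, il.2)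
      = (if k = il.1 then z (k, il.2) else 0) - (1/(N:ℝ)) * z (k, il.2) := by
    intro k; split <;> ring
  rw [Finset.sum_congr rfl fun k _ => this k, Finset.sum_sub_distrib,
    Finset.sum_ite_eq' Finset.univ il.1 (fun k => z (k, il.2))]
  simp [← Finset.mul_sum, lamMap]

lemma aux_lam_T_rowsum {N : ℕ} (hN : 2 ≤ N) (k : Fin N) :
    ∑ i : Fin N, |if k = i then 1 - 1/(N:ℝ) else -(1/(N:ℝ))| = 2 * ((N:ℝ) - 1) / N := by
  have hNpos : (0:ℝ) < N := by positivity
  have h1 : (1:ℝ)/(N:ℝ) ≤ 1 := by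
    rw [div_le_one hNpos]; exact_mod_cast hN.trans' (by norm_num)
  have key : ∀ i : Fin N, |if k = i then 1 - 1/(N:ℝ) else -(1/(N:ℝ))|
      = (if i = k then 1 - 2/(N:ℝ) else 0) + 1/(N:ℝ) := by
    intro i
    by_cases h : k = i
    · rw [if_pos h, if_pos h.symm, abs_of_nonneg (by linarith : (0:ℝ) ≤ 1 - 1/(N:ℝ))]; ring
    · rw [if_neg h, if_neg (Ne.symm h), abs_neg, abs_of_nonneg (by positivity : (0:ℝ) ≤ 1/(N:ℝ))]
      ring
  rw [Finset.sum_congr rfl fun i _ => key i, Finset.sum_add_distrib,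
    Finset.sum_ite_eq' Finset.univ k]
  simp [Finset.card_univ]
  field_simp
  ring

lemma aux_lam_l1 {N : ℕ} (hN : 2 ≤ N) (z : Fin N × Fin 2 → ℝ) :
    ∑ il : Fin N × Fin 2, |lamMap z il| ≤ (2 * ((N:ℝ) - 1) / N) * ∑ il : Fin N × Fin 2, |z il| := by
  rw [Finset.sum_congr rfl fun il _ => congrArg abs (aux_lam_as_T z il)]
  exact aux_l1_bound _ _ (fun k => le_of_eq (aux_lam_T_rowsum hN k)) z

lemma aux_lam_colsum {N : ℕ} (hN : 2 ≤ N) (z : Fin N × Fin 2 → ℝ) (j : Fin 2) :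
    ∑ i, lamMap z (i, j) = 0 := by
  have hNne : ((N:ℝ)) ≠ 0 := by positivity
  simp only [lamMap]
  rw [Finset.sum_sub_distrib, Finset.sum_const, Finset.card_univ]
  simp only [Fintype.card_fin, nsmul_eq_mul]
  field_simp
  ring

lemma aux_rot_l1 {N : ℕ} (θ : Fin N → ℝ) (x : Fin N × Fin 2 → ℝ) :
    ∑ il : Fin N × Fin 2, |rotMap θ x il| ≤ 2 * ∑ il : Fin N × Fin 2, |x il| := by
  rw [Fintype.sum_prod_type, Fintype.sum_prod_type]
  simp only [Fin.sum_univ_two]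
  rw [Finset.mul_sum]
  refine Finset.sum_le_sum fun i _ => ?_
  have hc := Real.abs_cos_le_one (θ i)
  have hs := Real.abs_sin_le_one (θ i)
  have h0 : rotMap θ x (i, 0) = Real.cos (θ i) * x (i,0) - Real.sin (θ i) * x (i,1) := by
    simp [rotMap]
  have h1 : rotMap θ x (i, 1) = Real.sin (θ i) * x (i,0) + Real.cos (θ i) * x (i,1) := by
    simp [rotMap]
  rw [h0, h1]
  have e0 : |Real.cos (θ i) * x (i,0) - Real.sin (θ i) * x (i,1)| ≤ |x (i,0)| + |x (i,1)| := by
    refine le_trans (abs_sub _ _) ?_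
    rw [abs_mul, abs_mul]
    nlinarith [abs_nonneg (x (i,0)), abs_nonneg (x (i,1)), abs_nonneg (Real.cos (θ i)), abs_nonneg (Real.sin (θ i))]
  have e1 : |Real.sin (θ i) * x (i,0) + Real.cos (θ i) * x (i,1)| ≤ |x (i,0)| + |x (i,1)| := by
    refine le_trans (abs_add_le _ _) ?_
    rw [abs_mul, abs_mul]
    nlinarith [abs_nonneg (x (i,0)), abs_nonneg (x (i,1)), abs_nonneg (Real.cos (θ i)), abs_nonneg (Real.sin (θ i))]
  linarith

lemma aux_abs_eq_sub_two_min (s : ℝ) : |s| = s - 2 * min s 0 := by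
  rcases le_total s 0 with h | h
  · rw [abs_of_nonpos h, min_eq_left h]; ring
  · rw [abs_of_nonneg h, min_eq_right h]; ring

lemma aux_kron_rowsum {N : ℕ} (S : Matrix (Fin N) (Fin N) ℝ) (β : ℝ)
    (h1 : ∀ i, ∑ j, S i j = 1) (h2 : ∀ i, -β ≤ ∑ j, min (S i j) 0) (k : Fin N) :
    ∑ i, |S k i| ≤ 1 + 2 * β := by
  have : ∑ i, |S k i| = (∑ i, S k i) - 2 * ∑ i, min (S k i) 0 := by
    rw [Finset.mul_sum, ← Finset.sum_sub_distrib]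
    exact Finset.sum_congr rfl fun i _ => aux_abs_eq_sub_two_min _
  rw [this, h1 k]
  have := h2 k
  linarith

lemma vtx_split {N : ℕ} (p q : Fin N) (j : Fin 2) (hpq : p ≠ q) (il : Fin N × Fin 2) :
    (if il = (p,j) then (1/2:ℝ) else if il = (q,j) then -(1/2:ℝ) else 0)
    = (if il = (p,j) then (1/2:ℝ) else 0) + (if il = (q,j) then -(1/2:ℝ) else 0) := by
  by_cases h1 : il = (p, j)
  · have h2 : il ≠ (q, j) := by
      rw [h1]; intro hc; exact hpq (Prod.mk.injEq .. ▸ hc).1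
    simp [h1, h2, hpq]
  · simp [h1]

lemma triple_sum_fst {N : ℕ} (f : Fin N × Fin N × Fin 2 → ℝ) (i : Fin N) (l : Fin 2) :
    ∑ t : Fin N × Fin N × Fin 2, (if (i,l) = (t.1, t.2.2) then f t else 0) = ∑ q, f (i, q, l) := by
  simp [Fintype.sum_prod_type, Prod.ext_iff, ite_and, Finset.sum_ite_eq, Finset.sum_ite_eq']

lemma triple_sum_snd {N : ℕ} (f : Fin N × Fin N × Fin 2 → ℝ) (i : Fin N) (l : Fin 2) :
    ∑ t : Fin N × Fin N × Fin 2, (if (i,l) = (t.2.1, t.2.2) then f t else 0) = ∑ p, f (p, i, l) := by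
  simp [Fintype.sum_prod_type, Prod.ext_iff, ite_and, Finset.sum_ite_eq, Finset.sum_ite_eq']

lemma vtx_abs {N : ℕ} (p q : Fin N) (j : Fin 2) (hpq : p ≠ q) (il : Fin N × Fin 2) :
    |if il = (p,j) then (1/2:ℝ) else if il = (q,j) then -(1/2:ℝ) else 0|
    = (if il = (p,j) then (1/2:ℝ) else 0) + (if il = (q,j) then (1/2:ℝ) else 0) := by
  by_cases h1 : il = (p, j)
  · have h2 : il ≠ (q, j) := by
      rw [h1]; intro hc; exact hpq (Prod.mk.injEq .. ▸ hc).1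
    simp [h1, h2, hpq]
  · by_cases h2 : il = (q, j) <;> simp [h1, h2, hpq, Ne.symm hpq]

lemma vtx_colsum {N : ℕ} (p q : Fin N) (j : Fin 2) (hpq : p ≠ q) (j' : Fin 2) :
    ∑ i : Fin N, (if ((i : Fin N), j') = (p,j) then (1/2:ℝ) else if ((i : Fin N), j') = (q,j) then -(1/2:ℝ) else 0) = 0 := by
  rw [Finset.sum_congr rfl fun i _ => vtx_split p q j hpq (i, j')]
  rw [Finset.sum_add_distrib]
  by_cases hj : j' = j
  · subst hj
    have e1 : ∀ i : Fin N, ((i, j') = (p, j')) = (i = p) := by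
      intro i; simp
    have e2 : ∀ i : Fin N, ((i, j') = (q, j')) = (i = q) := by
      intro i; simp
    simp only [e1, e2, Finset.sum_ite_eq' Finset.univ, Finset.mem_univ, if_true]
    norm_num
  · have e1 : ∀ i : Fin N, ((i, j') = (p, j)) = False := by
      intro i; simp [Prod.ext_iff, hj]
    have e2 : ∀ i : Fin N, ((i, j') = (q, j)) = False := by
      intro i; simp [Prod.ext_iff, hj]
    simp [e1, e2]

lemma vtx_l1 {N : ℕ} (p q : Fin N) (j : Fin 2) (hpq : p ≠ q) :
    ∑ il : Fin N × Fin 2, |if il = (p,j) then (1/2:ℝ) else if il = (q,j) then -(1/2:ℝ) else 0| = 1 := by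
  rw [Finset.sum_congr rfl fun il _ => vtx_abs p q j hpq il, Finset.sum_add_distrib]
  rw [Finset.sum_ite_eq' Finset.univ (p, j) (fun _ => (1/2:ℝ)),
    Finset.sum_ite_eq' Finset.univ (q, j) (fun _ => (1/2:ℝ))]
  norm_num

lemma hull_props {N : ℕ} (x : Fin N × Fin 2 → ℝ) (hx : x ∈ convexHull ℝ (vertexSetVbar N)) :
    (∀ j, ∑ i, x (i, j) = 0) ∧ ∑ il : Fin N × Fin 2, |x il| ≤ 1 := by
  set K : Set (Fin N × Fin 2 → ℝ) :=
    {y | (∀ j, ∑ i, y (i, j) = 0) ∧ ∑ il : Fin N × Fin 2, |y il| ≤ 1} with hK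
  have hconv : Convex ℝ K := by
    intro u hu v hv a b ha hb hab
    constructor
    · intro j
      have : ∀ i : Fin N, (a • u + b • v) (i, j) = a * u (i,j) + b * v (i,j) := fun i => rfl
      rw [Finset.sum_congr rfl fun i _ => this i, Finset.sum_add_distrib,
        ← Finset.mul_sum, ← Finset.mul_sum, hu.1 j, hv.1 j]
      ring
    · have hpt : ∀ il : Fin N × Fin 2, |(a • u + b • v) il| ≤ a * |u il| + b * |v il| := by
        intro il
        have : (a • u + b • v) il = a * u il + b * v il := rfl
        rw [this]
        refine le_trans (abs_add_le _ _) ?_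
        rw [abs_mul, abs_mul, abs_of_nonneg ha, abs_of_nonneg hb]
      refine le_trans (Finset.sum_le_sum fun il (_ : il ∈ Finset.univ) => hpt il) ?_
      rw [Finset.sum_add_distrib, ← Finset.mul_sum, ← Finset.mul_sum]
      nlinarith [hu.2, hv.2, Finset.sum_nonneg (fun il (_ : il ∈ Finset.univ) => abs_nonneg (u il)),
        Finset.sum_nonneg (fun il (_ : il ∈ Finset.univ) => abs_nonneg (v il))]
  have hsub : vertexSetVbar N ⊆ K := by
    rintro v ⟨p, q, j, hpq, rfl⟩
    exact ⟨fun j' => vtx_colsum p q j hpq j', le_of_eq (vtx_l1 p q j hpq)⟩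
  exact convexHull_min hsub hconv hx

lemma props_hull {N : ℕ} (hN : 2 ≤ N) (x : Fin N × Fin 2 → ℝ)
    (hcol : ∀ j, ∑ i, x (i, j) = 0) (hl1 : ∑ il : Fin N × Fin 2, |x il| ≤ 1) :
    x ∈ convexHull ℝ (vertexSetVbar N) := by
  classical
  set pos : Fin N × Fin 2 → ℝ := fun il => max (x il) 0 with hpos
  set neg : Fin N × Fin 2 → ℝ := fun il => max (-(x il)) 0 with hneg
  have hpos0 : ∀ il, 0 ≤ pos il := fun il => le_max_right _ _
  have hneg0 : ∀ il, 0 ≤ neg il := fun il => le_max_right _ _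
  have hx_eq : ∀ il, x il = pos il - neg il := by
    intro il; rcases le_total (x il) 0 with h|h
    · simp [hpos, hneg, max_eq_right h, max_eq_left (neg_nonneg.mpr h)]
    · simp [hpos, hneg, max_eq_left h, max_eq_right (neg_nonpos.mpr h)]
  have habs : ∀ il, |x il| = pos il + neg il := by
    intro il; rcases le_total (x il) 0 with h|h
    · simp [hpos, hneg, abs_of_nonpos h, max_eq_right h, max_eq_left (neg_nonneg.mpr h)]
    · simp [hpos, hneg, abs_of_nonneg h, max_eq_left h, max_eq_right (neg_nonpos.mpr h)]
  have hmul : ∀ il, pos il * neg il = 0 := by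
    intro il; rcases le_total (x il) 0 with h|h
    · simp [hpos, max_eq_right h]
    · simp [hneg, max_eq_right (neg_nonpos.mpr h)]
  set M : Fin 2 → ℝ := fun j => ∑ i, pos (i, j) with hM
  have hMneg : ∀ j, ∑ i, neg (i, j) = M j := by
    intro j
    have h0 := hcol j
    rw [Finset.sum_congr rfl fun i _ => hx_eq (i, j), Finset.sum_sub_distrib] at h0
    rw [hM]; linarith
  have hM0 : ∀ j, 0 ≤ M j := fun j => Finset.sum_nonneg fun i _ => hpos0 _
  set base : Fin N × Fin N × Fin 2 → ℝ :=
    fun t => if M t.2.2 = 0 then 0 else 2 * pos (t.1, t.2.2) * neg (t.2.1, t.2.2) / M t.2.2 with hbase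
  have hbase0 : ∀ t, 0 ≤ base t := by
    intro t; rw [hbase]; dsimp only
    split
    · exact le_refl 0
    · next hMj =>
        have h1 := hpos0 (t.1, t.2.2)
        have h2 := hneg0 (t.2.1, t.2.2)
        have h3 : 0 < M t.2.2 := lt_of_le_of_ne (hM0 _) (Ne.symm hMj)
        positivity
  have hbase_diag : ∀ (p : Fin N) (j : Fin 2), base (p, p, j) = 0 := by
    intro p j; rw [hbase]; dsimp only
    split
    · rfl
    · rw [mul_assoc, hmul (p, j)]; simp
  have hinner : ∀ j : Fin 2, ∑ p, ∑ q, base (p, q, j) = 2 * M j := by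
    intro j
    by_cases hMj : M j = 0
    · simp [hbase, hMj]
    · simp only [hbase, if_neg hMj]
      have : ∀ p q : Fin N, 2 * pos (p, j) * neg (q, j) / M j
          = (2 / M j) * (pos (p, j) * neg (q, j)) := by intro p q; ring
      simp only [this, ← Finset.mul_sum]
      rw [← Finset.sum_mul, hMneg j]
      show 2 / M j * (M j * M j) = 2 * M j
      field_simp
  have hbasesum : ∑ t : Fin N × Fin N × Fin 2, base t = ∑ j : Fin 2, 2 * M j := by
    rw [Fintype.sum_prod_type]
    simp only [Fintype.sum_prod_type]
    rw [Finset.sum_congr rfl fun p (_ : p ∈ Finset.univ) => Finset.sum_comm,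
      Finset.sum_comm]
    exact Finset.sum_congr rfl fun j _ => hinner j
  have hxl1 : ∑ il : Fin N × Fin 2, |x il| = ∑ j : Fin 2, 2 * M j := by
    rw [Fintype.sum_prod_type, Finset.sum_comm]
    refine Finset.sum_congr rfl fun l _ => ?_
    rw [Finset.sum_congr rfl fun i (_ : i ∈ Finset.univ) => habs (i, l),
      Finset.sum_add_distrib, hMneg l]
    show M l + M l = 2 * M l
    ring
  set slack : ℝ := 1 - ∑ t : Fin N × Fin N × Fin 2, base t with hslackdef
  have hslack : 0 ≤ slack := by
    rw [hslackdef, hbasesum, ← hxl1]; linarith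
  set p0 : Fin N := ⟨0, by omega⟩ with hp0
  set q0 : Fin N := ⟨1, by omega⟩ with hq0
  have hp0q0 : p0 ≠ q0 := by simp [hp0, hq0, Fin.ext_iff]
  set t1 : Fin N × Fin N × Fin 2 := (p0, q0, 0) with ht1
  set t2 : Fin N × Fin N × Fin 2 := (q0, p0, 0) with ht2
  have ht12 : t1 ≠ t2 := by simp [ht1, ht2, Prod.ext_iff, hp0q0]
  set w : Fin N × Fin N × Fin 2 → ℝ :=
    fun t => base t + ((if t = t1 then slack/2 else 0) + (if t = t2 then slack/2 else 0)) with hw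
  set vtx : Fin N × Fin N × Fin 2 → (Fin N × Fin 2 → ℝ) :=
    fun t il => if il = (t.1, t.2.2) then (1/2:ℝ) else if il = (t.2.1, t.2.2) then -(1/2:ℝ) else 0
    with hvtx
  set T : Finset (Fin N × Fin N × Fin 2) := Finset.univ.filter (fun t => t.1 ≠ t.2.1) with hT
  have hw_diag : ∀ t : Fin N × Fin N × Fin 2, t.1 = t.2.1 → w t = 0 := by
    rintro ⟨p, q, j⟩ h
    dsimp at h; subst h
    have h1 : (p, p, j) ≠ t1 := by
      intro hc
      obtain ⟨e1, e2, e3⟩ : p = p0 ∧ p = q0 ∧ j = 0 := by simpa [ht1, Prod.ext_iff] using hc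
      exact hp0q0 (e1.symm.trans e2)
    have h2 : (p, p, j) ≠ t2 := by
      intro hc
      obtain ⟨e1, e2, e3⟩ : p = q0 ∧ p = p0 ∧ j = 0 := by simpa [ht2, Prod.ext_iff] using hc
      exact hp0q0 (e2.symm.trans e1)
    rw [hw]
    dsimp only
    rw [if_neg h1, if_neg h2, hbase_diag p j]
    ring
  have hsumw : ∑ t ∈ T, w t = 1 := by
    have hTuniv : ∑ t ∈ T, w t = ∑ t : Fin N × Fin N × Fin 2, w t := by
      refine Finset.sum_subset (Finset.filter_subset _ _) fun t _ ht => ?_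
      refine hw_diag t ?_
      by_contra hne
      exact ht (Finset.mem_filter.mpr ⟨Finset.mem_univ _, hne⟩)
    rw [hTuniv, hw]
    dsimp only
    rw [Finset.sum_add_distrib, Finset.sum_add_distrib,
      Finset.sum_ite_eq' Finset.univ t1 (fun _ => slack/2),
      Finset.sum_ite_eq' Finset.univ t2 (fun _ => slack/2)]
    simp only [Finset.mem_univ, if_true]
    rw [hslackdef]
    ring
  have hw_nonneg : ∀ t ∈ T, 0 ≤ w t := by
    intro t _
    rw [hw]; dsimp only
    have i1 : (0:ℝ) ≤ if t = t1 then slack/2 else 0 := by split <;> [linarith; exact le_refl 0]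
    have i2 : (0:ℝ) ≤ if t = t2 then slack/2 else 0 := by split <;> [linarith; exact le_refl 0]
    have := hbase0 t
    linarith
  have hmem : ∀ t ∈ T, vtx t ∈ convexHull ℝ (vertexSetVbar N) := by
    intro t ht
    have hne : t.1 ≠ t.2.1 := (Finset.mem_filter.mp ht).2
    exact subset_convexHull ℝ _ ⟨t.1, t.2.1, t.2.2, hne, rfl⟩
  have hident : ∑ t ∈ T, w t • vtx t = x := by
    have hTuniv : ∑ t ∈ T, w t • vtx t = ∑ t : Fin N × Fin N × Fin 2, w t • vtx t := by
      refine Finset.sum_subset (Finset.filter_subset _ _) fun t _ ht => ?_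
      have : w t = 0 := by
        refine hw_diag t ?_
        by_contra hne
        exact ht (Finset.mem_filter.mpr ⟨Finset.mem_univ _, hne⟩)
      rw [this, zero_smul]
    rw [hTuniv]
    have hsplit : ∀ t, w t • vtx t = base t • vtx t +
        ((if t = t1 then slack/2 else 0) • vtx t + (if t = t2 then slack/2 else 0) • vtx t) := by
      intro t; rw [hw]; dsimp only; rw [add_smul, add_smul]
    rw [Finset.sum_congr rfl fun t _ => hsplit t, Finset.sum_add_distrib, Finset.sum_add_distrib]
    have e1 : ∑ t : Fin N × Fin N × Fin 2, (if t = t1 then slack/2 else 0) • vtx t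
        = (slack/2) • vtx t1 := by
      have : ∀ t, (if t = t1 then slack/2 else 0) • vtx t
          = (if t = t1 then (slack/2) • vtx t else 0) := by
        intro t; split <;> simp
      rw [Finset.sum_congr rfl fun t _ => this t, Finset.sum_ite_eq' Finset.univ t1]
      simp
    have e2 : ∑ t : Fin N × Fin N × Fin 2, (if t = t2 then slack/2 else 0) • vtx t
        = (slack/2) • vtx t2 := by
      have : ∀ t, (if t = t2 then slack/2 else 0) • vtx t
          = (if t = t2 then (slack/2) • vtx t else 0) := by
        intro t; split <;> simp
      rw [Finset.sum_congr rfl fun t _ => this t, Finset.sum_ite_eq' Finset.univ t2]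
      simp
    have hvneg : vtx t2 = -vtx t1 := by
      funext il
      rw [hvtx]
      show (if il = (q0, 0) then (1/2:ℝ) else if il = (p0, 0) then -(1/2:ℝ) else 0)
        = -(if il = (p0, 0) then (1/2:ℝ) else if il = (q0, 0) then -(1/2:ℝ) else 0)
      rw [vtx_split q0 p0 0 (Ne.symm hp0q0) il, vtx_split p0 q0 0 hp0q0 il]
      split_ifs <;> norm_num
    rw [e1, e2, hvneg]
    have : (slack/2) • vtx t1 + (slack/2) • (-vtx t1) = 0 := by
      rw [smul_neg]; exact add_neg_cancel _
    rw [this, add_zero]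
    -- main computation: ∑ t, base t • vtx t = x
    funext il
    obtain ⟨i, l⟩ := il
    rw [Finset.sum_apply]
    have claim1 : ∀ t : Fin N × Fin N × Fin 2, (base t • vtx t) (i, l)
        = (if (i,l) = (t.1, t.2.2) then base t * (1/2) else 0)
          + (if (i,l) = (t.2.1, t.2.2) then base t * (-(1/2)) else 0) := by
      intro t
      rw [Pi.smul_apply, smul_eq_mul]
      by_cases hd : t.1 = t.2.1
      · obtain ⟨p, q, j⟩ := t
        dsimp only at hd ⊢
        subst hd
        rw [hbase_diag]
        simp
      · rw [hvtx]
        show base t * (if (i,l) = (t.1, t.2.2) then (1/2:ℝ) else if (i,l) = (t.2.1, t.2.2) then -(1/2:ℝ) else 0) = _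
        rw [vtx_split t.1 t.2.1 t.2.2 hd (i,l)]
        split_ifs <;> ring
    rw [Finset.sum_congr rfl fun t _ => claim1 t, Finset.sum_add_distrib,
      triple_sum_fst (fun t => base t * (1/2)) i l,
      triple_sum_snd (fun t => base t * (-(1/2))) i l,
      ← Finset.sum_mul, ← Finset.sum_mul]
    have hrow : ∑ q, base (i, q, l) = if M l = 0 then 0 else 2 * pos (i, l) := by
      by_cases hMl : M l = 0
      · simp [hbase, hMl]
      · rw [if_neg hMl]
        have : ∀ q : Fin N, base (i, q, l) = (2 * pos (i,l) / M l) * neg (q, l) := by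
          intro q; rw [hbase]; dsimp only; rw [if_neg hMl]; ring
        rw [Finset.sum_congr rfl fun q _ => this q, ← Finset.mul_sum, hMneg l]
        field_simp
    have hcolb : ∑ p, base (p, i, l) = if M l = 0 then 0 else 2 * neg (i, l) := by
      by_cases hMl : M l = 0
      · simp [hbase, hMl]
      · rw [if_neg hMl]
        have : ∀ p : Fin N, base (p, i, l) = (2 * neg (i,l) / M l) * pos (p, l) := by
          intro p; rw [hbase]; dsimp only; rw [if_neg hMl]; ring
        rw [Finset.sum_congr rfl fun p _ => this p, ← Finset.mul_sum]
        show 2 * neg (i, l) / M l * M l = 2 * neg (i, l)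
        field_simp
    rw [hrow, hcolb]
    by_cases hMl : M l = 0
    · rw [if_pos hMl, if_pos hMl]
      have h1 : pos (i, l) = 0 := by
        have hle : pos (i, l) ≤ M l := Finset.single_le_sum (fun k (_ : k ∈ Finset.univ) => hpos0 (k, l)) (Finset.mem_univ i)
        have := hpos0 (i, l); linarith
      have h2 : neg (i, l) = 0 := by
        have hle : neg (i, l) ≤ ∑ k, neg (k, l) := Finset.single_le_sum (fun k (_ : k ∈ Finset.univ) => hneg0 (k, l)) (Finset.mem_univ i)
        rw [hMneg l] at hle
        have := hneg0 (i, l); linarith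
      rw [hx_eq (i, l), h1, h2]
      ring
    · rw [if_neg hMl, if_neg hMl, hx_eq (i, l)]
      ring
  exact hident ▸ Convex.sum_mem (convex_convexHull ℝ _) hw_nonneg hsumw hmem

lemma aux_h_bound (n h c : ℝ) (hn : 2 ≤ n) (h0 : 0 < h) (h1 : h ≤ 1/(2*n))
    (hc0 : 0 ≤ c) (hc : c ≤ 3) : h * (2*(n-1)/n * c) ≤ 1 := by
  have hnpos : (0:ℝ) < n := by linarith
  have hn1 : (0:ℝ) ≤ n - 1 := by linarith
  have hB0 : (0:ℝ) ≤ 2*(n-1)/n*c := by positivity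
  have hB : 2*(n-1)/n*c ≤ 2*n := by
    rw [div_mul_eq_mul_div, div_le_iff₀ hnpos]
    nlinarith [mul_nonneg hn1 (by linarith : (0:ℝ) ≤ 3 - c), sq_nonneg (2*n - 3)]
  calc h * (2*(n-1)/n*c) ≤ (1/(2*n)) * (2*n) :=
        mul_le_mul h1 hB hB0 (by positivity)
    _ = 1 := by field_simp

theorem scaled_lam_rot_maps_into_convexHull_Vbar {N : ℕ} (hN : 2 ≤ N)
    (α β : ℝ) (hα : 0 < α ∧ α ≤ 1 / 2) (hβ : 0 ≤ β ∧ β < α / 2)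
    (S : Matrix (Fin N) (Fin N) ℝ) (hS : Admissible α β S)
    (θ : Fin N → ℝ) (h : ℝ) (h0 : 0 < h) (h1 : h ≤ 1 / (2 * (N : ℝ)))
    (x : Fin N × Fin 2 → ℝ) (hx : x ∈ convexHull ℝ (vertexSetVbar N)) :
    h • lamMap (rotMap θ x) ∈ convexHull ℝ (vertexSetVbar N) ∧
      h • lamMap (kronTr S (rotMap θ x)) ∈ convexHull ℝ (vertexSetVbar N) := by
  obtain ⟨hcolx, hl1x⟩ := hull_props x hx
  have hN2 : (2:ℝ) ≤ (N:ℝ) := by exact_mod_cast hN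
  have hrot : ∑ il : Fin N × Fin 2, |rotMap θ x il| ≤ 2 :=
    le_trans (aux_rot_l1 θ x) (by linarith)
  have hrot0 : 0 ≤ ∑ il : Fin N × Fin 2, |rotMap θ x il| :=
    Finset.sum_nonneg fun il _ => abs_nonneg _
  have hC : (0:ℝ) ≤ 2 * ((N:ℝ) - 1) / N := by
    have h1 : (0:ℝ) ≤ (N:ℝ) - 1 := by linarith
    have h2 : (0:ℝ) < (N:ℝ) := by linarith
    positivity
  constructor
  · refine props_hull hN _ (fun j => ?_) ?_
    · have : ∀ i : Fin N, (h • lamMap (rotMap θ x)) (i, j) = h * lamMap (rotMap θ x) (i, j) :=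
        fun i => rfl
      rw [Finset.sum_congr rfl fun i _ => this i, ← Finset.mul_sum,
        aux_lam_colsum hN (rotMap θ x) j, mul_zero]
    · have habs : ∀ il : Fin N × Fin 2, |(h • lamMap (rotMap θ x)) il|
          = h * |lamMap (rotMap θ x) il| := by
        intro il
        have : (h • lamMap (rotMap θ x)) il = h * lamMap (rotMap θ x) il := rfl
        rw [this, abs_mul, abs_of_pos h0]
      rw [Finset.sum_congr rfl fun il _ => habs il, ← Finset.mul_sum]
      have hb := le_trans (aux_lam_l1 hN (rotMap θ x))
        (mul_le_mul_of_nonneg_left hrot hC)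
      have hb0 : 0 ≤ ∑ il : Fin N × Fin 2, |lamMap (rotMap θ x) il| :=
        Finset.sum_nonneg fun il _ => abs_nonneg _
      have hh : h * (2 * ((N:ℝ) - 1) / N * 2) ≤ 1 :=
        aux_h_bound (N:ℝ) h 2 hN2 h0 h1 (by norm_num) (by norm_num)
      calc h * ∑ il : Fin N × Fin 2, |lamMap (rotMap θ x) il|
          ≤ h * (2 * ((N:ℝ) - 1) / N * 2) := mul_le_mul_of_nonneg_left hb (le_of_lt h0)
        _ ≤ 1 := hh
  · obtain ⟨hS1, hS2, _⟩ := hS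
    have hkron : ∑ il : Fin N × Fin 2, |kronTr S (rotMap θ x) il|
        ≤ (1 + 2*β) * ∑ il : Fin N × Fin 2, |rotMap θ x il| :=
      aux_l1_bound (fun k i => S k i) (1 + 2*β) (aux_kron_rowsum S β hS1 hS2) (rotMap θ x)
    have hβ0 : (0:ℝ) ≤ 1 + 2*β := by linarith [hβ.1]
    have hkron2 : ∑ il : Fin N × Fin 2, |kronTr S (rotMap θ x) il| ≤ (1 + 2*β) * 2 :=
      le_trans hkron (mul_le_mul_of_nonneg_left hrot hβ0)
    refine props_hull hN _ (fun j => ?_) ?_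
    · have : ∀ i : Fin N, (h • lamMap (kronTr S (rotMap θ x))) (i, j)
          = h * lamMap (kronTr S (rotMap θ x)) (i, j) := fun i => rfl
      rw [Finset.sum_congr rfl fun i _ => this i, ← Finset.mul_sum,
        aux_lam_colsum hN (kronTr S (rotMap θ x)) j, mul_zero]
    · have habs : ∀ il : Fin N × Fin 2, |(h • lamMap (kronTr S (rotMap θ x))) il|
          = h * |lamMap (kronTr S (rotMap θ x)) il| := by
        intro il
        have : (h • lamMap (kronTr S (rotMap θ x))) il = h * lamMap (kronTr S (rotMap θ x)) il := rfl
        rw [this, abs_mul, abs_of_pos h0]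
      rw [Finset.sum_congr rfl fun il _ => habs il, ← Finset.mul_sum]
      have hb := le_trans (aux_lam_l1 hN (kronTr S (rotMap θ x)))
        (mul_le_mul_of_nonneg_left hkron2 hC)
      have hh : h * (2 * ((N:ℝ) - 1) / N * ((1 + 2*β) * 2)) ≤ 1 :=
        aux_h_bound (N:ℝ) h ((1 + 2*β) * 2) hN2 h0 h1 (by linarith [hβ.1])
          (by linarith [hβ.2, hα.2])
      calc h * ∑ il : Fin N × Fin 2, |lamMap (kronTr S (rotMap θ x)) il|
          ≤ h * (2 * ((N:ℝ) - 1) / N * ((1 + 2*β) * 2)) := mul_le_mul_of_nonneg_left hb (le_of_lt h0)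
        _ ≤ 1 := hh
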